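/- Let n ≥ 1, let 𝒴 = {1, ..., K} with K ≥ 1, and let (X_i, Y_i), i = n+1, ..., 2n+1, be random variables with values in 𝒳 × 𝒴 whose joint distribution is exchangeable. Fix a measurable score function s : 𝒳 × 𝒴 → ℝ, define p(X_{2n+1}, y) = (Σ_{i=n+1}^{2n} 1{s(X_i, Y_i) ≤ s(X_{2n+1}, y)} + 1)/(n+1) for each y ∈ 𝒴, and fix α ∈ (0,1). Define the ordinal prediction interval C(X_{2n+1}) = {y_min, y_min + 1, ..., y_max}, where y_min = min{y ∈ 𝒴 : p(X_{2n+1}, y) > α} and y_max = max{y ∈ 𝒴 : p(X_{2n+1}, y) > α} (and C(X_{2n+1}) = ∅ when the set {y : p(X_{2n+1}, y) > α} is empty). Then P(Y_{2n+1} ∈ C(X_{2n+1})) ≥ 1 − α. -/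

import Mathlib

open MeasureTheory ProbabilityTheory
open scoped ENNReal

lemma filter_card_perm {ι : Type*} [Fintype ι] [DecidableEq ι]
    (σ : Equiv.Perm ι) (Q : ι → Prop) [DecidablePred Q] :
    (Finset.univ.filter (fun i => Q (σ i))).card = (Finset.univ.filter Q).card := by
  apply Finset.card_bij' (fun i _ => σ i) (fun i _ => σ.symm i) <;> simp

lemma card_badset_bound {ι V : Type*} [Fintype ι] [DecidableEq ι]
    (f : ι → V → ℝ) (v : V) (c : ℝ) (hc : 0 ≤ c)
    (bad : ι → V → Prop) [∀ j, DecidablePred (bad j)]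
    (hbad : ∀ j w, bad j w ↔ ((Finset.univ.filter (fun i => f i w ≤ f j w)).card : ℝ) ≤ c) :
    ((Finset.univ.filter (fun j => bad j v)).card : ℝ) ≤ c := by
  set B := Finset.univ.filter (fun j => bad j v) with hB
  rcases B.eq_empty_or_nonempty with h | h
  · simp [h, hc]
  · obtain ⟨j₀, hj₀B, hj₀max⟩ := B.exists_max_image (fun j => f j v) h
    have hj₀ : ((Finset.univ.filter (fun i => f i v ≤ f j₀ v)).card : ℝ) ≤ c := by
      have := (Finset.mem_filter.mp hj₀B).2
      exact (hbad j₀ v).mp this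
    have hsub : B ⊆ Finset.univ.filter (fun i => f i v ≤ f j₀ v) := by
      intro j hj
      exact Finset.mem_filter.mpr ⟨Finset.mem_univ _, hj₀max j hj⟩
    calc (B.card : ℝ) ≤ _ := by exact_mod_cast Finset.card_le_card hsub
      _ ≤ c := hj₀

theorem ordinal_prediction_interval_marginal_coverage
    {Ω : Type*} [MeasurableSpace Ω] (P : Measure Ω) [IsProbabilityMeasure P]
    {𝒳 : Type*} [MeasurableSpace 𝒳]
    (n K : ℕ) (hn : 1 ≤ n) (hK : 1 ≤ K)
    (Z : Fin (n + 1) → Ω → 𝒳 × Fin K)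
    (hmeas : ∀ i, Measurable (Z i))
    (hexch : ∀ σ : Equiv.Perm (Fin (n + 1)),
      Measure.map (fun ω i => Z (σ i) ω) P = Measure.map (fun ω i => Z i ω) P)
    (s : 𝒳 × Fin K → ℝ) (hs : Measurable s)
    (p : Ω → Fin K → ℝ)
    (hp : ∀ ω y, p ω y =
      (((Finset.univ.filter
          (fun i : Fin n => s (Z i.castSucc ω) ≤ s ((Z (Fin.last n) ω).1, y))).card : ℝ) + 1)
        / (n + 1))
    (α : ℝ) (hα : α ∈ Set.Ioo (0 : ℝ) 1)
    (A : Ω → Finset (Fin K))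
    (hA : ∀ ω, A ω = Finset.univ.filter (fun y => α < p ω y)) :
    ENNReal.ofReal (1 - α) ≤
      P {ω | ∃ h : (A ω).Nonempty,
        (Z (Fin.last n) ω).2 ∈ Finset.Icc ((A ω).min' h) ((A ω).max' h)} := by
  obtain ⟨hα0, hα1⟩ := hα
  classical
  set V := (Fin (n + 1) → 𝒳 × Fin K)
  set W : Ω → V := fun ω i => Z i ω with hW
  have hWmeas : Measurable W := measurable_pi_lambda _ hmeas
  -- bad sets
  set bad : Fin (n + 1) → Set V := fun j =>
    {v | ((Finset.univ.filter (fun i => s (v i) ≤ s (v j))).card : ℝ) ≤ α * (n + 1)} with hbad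
  have hbadmeas : ∀ j, MeasurableSet (bad j) := by
    intro j
    have hcard : Measurable (fun v : V =>
        ((Finset.univ.filter (fun i => s (v i) ≤ s (v j))).card : ℝ)) := by
      have : ∀ v : V, ((Finset.univ.filter (fun i => s (v i) ≤ s (v j))).card : ℝ)
          = ∑ i : Fin (n + 1), if s (v i) ≤ s (v j) then (1 : ℝ) else 0 := by
        intro v
        rw [Finset.card_filter]
        push_cast
        rfl
      simp_rw [this]
      apply Finset.measurable_sum
      intro i _
      exact Measurable.ite
        (measurableSet_le (hs.comp (measurable_pi_apply i)) (hs.comp (measurable_pi_apply j)))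
        measurable_const measurable_const
    exact measurableSet_le hcard measurable_const
  -- all bad events have the same probability
  have hsameprob : ∀ j, P (W ⁻¹' bad j) = P (W ⁻¹' bad (Fin.last n)) := by
    intro j
    set σ := Equiv.swap j (Fin.last n) with hσ
    have hmapmeas : Measurable (fun ω (i : Fin (n + 1)) => Z (σ i) ω) :=
      measurable_pi_lambda _ fun i => hmeas (σ i)
    have h1 : P ((fun ω (i : Fin (n + 1)) => Z (σ i) ω) ⁻¹' bad (Fin.last n))
        = P (W ⁻¹' bad (Fin.last n)) := by
      rw [← Measure.map_apply hmapmeas (hbadmeas _), ← Measure.map_apply hWmeas (hbadmeas _),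
        hexch σ]
    have h2 : ((fun ω (i : Fin (n + 1)) => Z (σ i) ω) ⁻¹' bad (Fin.last n)) = W ⁻¹' bad j := by
      ext ω
      simp only [Set.mem_preimage, hbad, Set.mem_setOf_eq, hW]
      have hσlast : σ (Fin.last n) = j := Equiv.swap_apply_right _ _
      have hceq : (Finset.univ.filter
            (fun i => s (Z (σ i) ω) ≤ s (Z (σ (Fin.last n)) ω))).card
          = (Finset.univ.filter (fun i => s (Z i ω) ≤ s (Z j ω))).card := by
        simp only [hσlast]
        exact filter_card_perm σ (fun i => s (Z i ω) ≤ s (Z j ω))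
      exact iff_of_eq (congrArg (fun c : ℕ => (c : ℝ) ≤ α * (n + 1)) hceq)
    rw [← h2, h1]
  -- the sum bound
  have hsum : (n + 1 : ℝ≥0∞) * P (W ⁻¹' bad (Fin.last n)) ≤ ENNReal.ofReal (α * (n + 1)) := by
    have hsum1 : ∑ j : Fin (n + 1), P (W ⁻¹' bad j)
        = (n + 1 : ℝ≥0∞) * P (W ⁻¹' bad (Fin.last n)) := by
      rw [Finset.sum_congr rfl (fun j _ => hsameprob j), Finset.sum_const]
      simp [mul_comm]
    rw [← hsum1]
    have hlint : ∑ j : Fin (n + 1), P (W ⁻¹' bad j)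
        = ∫⁻ ω, ∑ j : Fin (n + 1), (W ⁻¹' bad j).indicator (fun _ => (1 : ℝ≥0∞)) ω ∂P := by
      rw [lintegral_finset_sum]
      · refine Finset.sum_congr rfl fun j _ => ?_
        rw [lintegral_indicator (hWmeas (hbadmeas j))]
        simp
      · intro j _
        exact measurable_const.indicator (hWmeas (hbadmeas j))
    rw [hlint]
    have hptwise : ∀ ω, ∑ j : Fin (n + 1), (W ⁻¹' bad j).indicator (fun _ => (1 : ℝ≥0∞)) ω
        ≤ ENNReal.ofReal (α * (n + 1)) := by
      intro ω
      have hcount : ∑ j : Fin (n + 1), (W ⁻¹' bad j).indicator (fun _ => (1 : ℝ≥0∞)) ω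
          = ((Finset.univ.filter (fun j => W ω ∈ bad j)).card : ℝ≥0∞) := by
        rw [Finset.card_filter]
        push_cast
        refine Finset.sum_congr rfl fun j _ => ?_
        by_cases h : W ω ∈ bad j <;> simp [Set.indicator_apply, h]
      rw [hcount]
      have hb : ((Finset.univ.filter (fun j => W ω ∈ bad j)).card : ℝ) ≤ α * (n + 1) := by
        refine card_badset_bound (fun i v => s (v i)) (W ω) (α * (n + 1))
          (by positivity) (fun j v => v ∈ bad j) (fun j w => ?_)
        simp [hbad]
      calc ((Finset.univ.filter (fun j => W ω ∈ bad j)).card : ℝ≥0∞)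
          = ENNReal.ofReal ((Finset.univ.filter (fun j => W ω ∈ bad j)).card : ℝ) := by
            simp
        _ ≤ ENNReal.ofReal (α * (n + 1)) := ENNReal.ofReal_le_ofReal hb
    calc ∫⁻ ω, ∑ j : Fin (n + 1), (W ⁻¹' bad j).indicator (fun _ => (1 : ℝ≥0∞)) ω ∂P
        ≤ ∫⁻ _, ENNReal.ofReal (α * (n + 1)) ∂P := lintegral_mono hptwise
      _ = ENNReal.ofReal (α * (n + 1)) := by simp
  -- probability of bad last ≤ α
  have hbadprob : P (W ⁻¹' bad (Fin.last n)) ≤ ENNReal.ofReal α := by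
    have h1 : ENNReal.ofReal (α * (n + 1)) = (n + 1 : ℝ≥0∞) * ENNReal.ofReal α := by
      rw [mul_comm α, ENNReal.ofReal_mul (by positivity)]
      congr 1
      have hcast : ((n : ℝ) + 1) = ((n + 1 : ℕ) : ℝ) := by push_cast; ring
      rw [hcast, ENNReal.ofReal_natCast]
      push_cast
      ring
    rw [h1] at hsum
    have hne0 : (n + 1 : ℝ≥0∞) ≠ 0 := by
      intro h
      have h2 : (1 : ℝ≥0∞) = 0 := ((add_eq_zero_iff_of_nonneg zero_le zero_le).mp h).2
      exact one_ne_zero h2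
    have hnetop : (n + 1 : ℝ≥0∞) ≠ ⊤ := by finiteness
    exact (ENNReal.mul_le_mul_iff_right hne0 hnetop).mp hsum
  -- good event is contained in the target
  set E := {ω | ∃ h : (A ω).Nonempty,
      (Z (Fin.last n) ω).2 ∈ Finset.Icc ((A ω).min' h) ((A ω).max' h)} with hE
  have hEc : Eᶜ ⊆ W ⁻¹' bad (Fin.last n) := by
    intro ω hω
    by_contra hnb
    apply hω
    -- not bad means p ω Y_last > α
    simp only [Set.mem_preimage, hbad, Set.mem_setOf_eq, hW, not_le] at hnb
    have hcard : (Finset.univ.filter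
          (fun i : Fin (n + 1) => s (Z i ω) ≤ s (Z (Fin.last n) ω))).card
        = (Finset.univ.filter
          (fun i : Fin n => s (Z i.castSucc ω) ≤ s (Z (Fin.last n) ω))).card + 1 := by
      rw [Finset.card_filter, Finset.card_filter, Fin.sum_univ_castSucc]
      simp
    set y := (Z (Fin.last n) ω).2 with hy
    have hpval : α < p ω y := by
      rw [hp ω y]
      have hsy : s ((Z (Fin.last n) ω).1, y) = s (Z (Fin.last n) ω) := by
        rw [hy]
      rw [hsy]
      rw [lt_div_iff₀ (by positivity)]
      have : ((Finset.univ.filter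
          (fun i : Fin n => s (Z i.castSucc ω) ≤ s (Z (Fin.last n) ω))).card : ℝ) + 1
          = ((Finset.univ.filter
          (fun i : Fin (n + 1) => s (Z i ω) ≤ s (Z (Fin.last n) ω))).card : ℝ) := by
        rw [hcard]; push_cast; ring
      rw [this]
      linarith [hnb]
    have hyA : y ∈ A ω := by
      rw [hA ω]
      exact Finset.mem_filter.mpr ⟨Finset.mem_univ _, hpval⟩
    have hne : (A ω).Nonempty := ⟨y, hyA⟩
    exact ⟨hne, Finset.mem_Icc.mpr ⟨(A ω).min'_le y hyA, (A ω).le_max' y hyA⟩⟩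
  have hEcprob : P Eᶜ ≤ ENNReal.ofReal α := le_trans (measure_mono hEc) hbadprob
  have h1 : (1 : ℝ≥0∞) ≤ P E + P Eᶜ := by
    have := measure_union_le (μ := P) E Eᶜ
    rw [Set.union_compl_self, measure_univ] at this
    exact this
  have h2 : (1 : ℝ≥0∞) ≤ P E + ENNReal.ofReal α := le_trans h1 (by gcongr)
  have h3 : ENNReal.ofReal (1 - α) = 1 - ENNReal.ofReal α := by
    rw [ENNReal.ofReal_sub _ (le_of_lt hα0), ENNReal.ofReal_one]
  rw [h3]
  exact tsub_le_iff_right.mpr h2
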